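/- arXiv:1205.0414 — 3 statements merged into one kernel-verified Lean document; each statement's English description precedes it below -/
import Mathlib

section
/- Let X be a sequentially complete locally convex topological vector space over 𝕂 (𝕂 = ℝ or ℂ) and (xₙ)_{n∈ℤ₊} a sequence in X with xₙ → 0. Then the set K = { Σ_{n=0}^{∞} aₙxₙ : a ∈ ℓ¹, ‖a‖₁ ≤ 1 } is a Banach disk in X (in fact K is compact, convex and balanced), and the linear span of {xₙ : n ∈ ℤ₊} is a dense subspace of the Banach space X_K, i.e. dense with respect to the norm p_K. -/
open Filter Set Pointwise Topology
set_option linter.unusedSectionVars false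

section helpers
variable {𝕜 : Type*} [RCLike 𝕜] {X : Type*} [AddCommGroup X] [Module 𝕜 X]
    [Module ℝ X] [IsScalarTower ℝ 𝕜 X]

lemma bd_real_smul (r : ℝ) (v : X) : r • v = ((r : 𝕜)) • v := by
  rw [RCLike.ofReal_alg, smul_one_smul]

lemma bd_smulCommClass : SMulCommClass ℝ 𝕜 X := by
  constructor
  intro r c v
  rw [bd_real_smul (𝕜 := 𝕜) r (c • v), bd_real_smul (𝕜 := 𝕜) r v, smul_smul, smul_smul, mul_comm]

/-- A finite "ℓ¹-combination" of elements of a balanced convex set containing `0`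
stays in the set. -/
lemma bd_sum_mem {V : Set X} (hbal : Balanced 𝕜 V) (hconv : Convex ℝ V) (h0 : (0:X) ∈ V)
    (s : Finset ℕ) (a : ℕ → 𝕜) (v : ℕ → X) (hv : ∀ n ∈ s, v n ∈ V)
    (ha : ∑ n ∈ s, ‖a n‖ ≤ 1) : (∑ n ∈ s, a n • v n) ∈ V := by
  set W : ℝ := ∑ n ∈ s, ‖a n‖ with hW
  have hWnonneg : 0 ≤ W := Finset.sum_nonneg fun n _ => norm_nonneg _
  rcases eq_or_lt_of_le hWnonneg with hW0 | hWpos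
  · have : ∀ n ∈ s, a n • v n = 0 := by
      intro n hn
      have : ‖a n‖ = 0 := le_antisymm (by
        calc ‖a n‖ ≤ W := Finset.single_le_sum (fun i _ => norm_nonneg (a i)) hn
        _ = 0 := hW0.symm) (norm_nonneg _)
      simp [norm_eq_zero.mp this]
    rw [Finset.sum_congr rfl this]
    simpa
  · -- W > 0
    set u : ℕ → X := fun n => if h : a n = 0 then 0 else ((‖a n‖ : 𝕜)⁻¹ * a n) • v n with hu
    have hus : ∀ n ∈ s, u n ∈ V := by
      intro n hn
      by_cases h : a n = 0
      · simp [hu, h, h0]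
      · simp only [hu, h, dif_neg, not_false_iff]
        apply hbal.smul_mem _ (hv n hn)
        rw [norm_mul, norm_inv, RCLike.norm_ofReal, abs_norm]
        rw [inv_mul_cancel₀ (norm_ne_zero_iff.mpr h)]
    have key : ∀ n ∈ s, a n • v n = ‖a n‖ • u n := by
      intro n _
      by_cases h : a n = 0
      · simp [hu, h]
      · simp only [hu, h, dif_neg, not_false_iff]
        rw [bd_real_smul (𝕜 := 𝕜) (‖a n‖) _, smul_smul, ← mul_assoc,
          mul_inv_cancel₀ (by exact_mod_cast norm_ne_zero_iff.mpr h), one_mul]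
    rw [Finset.sum_congr rfl key]
    have hz : (∑ n ∈ s, (W⁻¹ * ‖a n‖) • u n) ∈ V := by
      apply hconv.sum_mem (fun i _ => mul_nonneg (inv_nonneg.mpr hWnonneg) (norm_nonneg _))
        _ hus
      rw [← Finset.mul_sum, inv_mul_cancel₀ (ne_of_gt hWpos)]
    have hWz : ∑ n ∈ s, ‖a n‖ • u n = W • ∑ n ∈ s, (W⁻¹ * ‖a n‖) • u n := by
      rw [Finset.smul_sum]
      refine Finset.sum_congr rfl fun n _ => ?_
      rw [smul_smul, ← mul_assoc, mul_inv_cancel₀ (ne_of_gt hWpos), one_mul]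
    rw [hWz, bd_real_smul (𝕜 := 𝕜) W _]
    apply hbal.smul_mem _ hz
    rw [RCLike.norm_ofReal, abs_of_nonneg hWnonneg]
    exact ha
end helpers

section helpers2
variable {𝕜 : Type*} [RCLike 𝕜] {X : Type*} [AddCommGroup X] [Module 𝕜 X]
    [Module ℝ X] [IsScalarTower ℝ 𝕜 X]

lemma bd_mem_smul_of_le {K : Set X} (hbal : Balanced 𝕜 K) {y : X} {r t : ℝ}
    (hr : 0 < r) (hrt : r ≤ t) (h : y ∈ r • K) : y ∈ t • K := by
  obtain ⟨k, hk, rfl⟩ := h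
  have ht : (0:ℝ) < t := lt_of_lt_of_le hr hrt
  have : ((r / t : ℝ) : 𝕜) • k ∈ K := by
    apply hbal.smul_mem _ hk
    rw [RCLike.norm_ofReal, abs_of_nonneg (div_nonneg hr.le ht.le)]
    exact div_le_one_of_le₀ hrt ht.le
  refine ⟨((r / t : ℝ) : 𝕜) • k, this, ?_⟩
  show t • (((r / t : ℝ) : 𝕜) • k) = r • k
  rw [← bd_real_smul (𝕜 := 𝕜), smul_smul, mul_div_cancel₀ _ (ne_of_gt ht)]

lemma bd_mem_smul_of_gauge_lt {K : Set X} (hbal : Balanced 𝕜 K) {y : X} {t : ℝ}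
    (habs : ∃ r : ℝ, 0 < r ∧ y ∈ r • K) (h : gauge K y < t) : y ∈ t • K := by
  have hne : {r : ℝ | 0 < r ∧ y ∈ r • K}.Nonempty := habs
  have hbdd : BddBelow {r : ℝ | 0 < r ∧ y ∈ r • K} := ⟨0, fun r hr => hr.1.le⟩
  rw [gauge] at h
  obtain ⟨r, hrmem, hrt⟩ := exists_lt_of_csInf_lt hne h
  exact bd_mem_smul_of_le hbal hrmem.1 hrt.le hrmem.2

lemma bd_add_mem_smul {K : Set X} (hconv : Convex ℝ K) {y z : X} {t s : ℝ}
    (ht : 0 < t) (hs : 0 < s) (hy : y ∈ t • K) (hz : z ∈ s • K) :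
    y + z ∈ (t + s) • K := by
  obtain ⟨k₁, hk₁, rfl⟩ := hy
  obtain ⟨k₂, hk₂, rfl⟩ := hz
  have hts : (0:ℝ) < t + s := by linarith
  refine ⟨(t / (t+s)) • k₁ + (s / (t+s)) • k₂, ?_, ?_⟩
  · exact hconv hk₁ hk₂ (div_nonneg ht.le hts.le) (div_nonneg hs.le hts.le)
      (by field_simp)
  · show (t+s) • ((t / (t+s)) • k₁ + (s / (t+s)) • k₂) = t • k₁ + s • k₂
    rw [smul_add, smul_smul, smul_smul, mul_div_cancel₀ _ (ne_of_gt hts),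
      mul_div_cancel₀ _ (ne_of_gt hts)]

lemma bd_gauge_add_le {K : Set X} (hconv : Convex ℝ K) (hbal : Balanced 𝕜 K) {y z : X}
    (hay : ∃ r : ℝ, 0 < r ∧ y ∈ r • K) (haz : ∃ r : ℝ, 0 < r ∧ z ∈ r • K) :
    gauge K (y + z) ≤ gauge K y + gauge K z := by
  refine le_of_forall_pos_le_add fun ε hε => ?_
  have h1 : y ∈ (gauge K y + ε/2) • K :=
    bd_mem_smul_of_gauge_lt hbal hay (by linarith)
  have h2 : z ∈ (gauge K z + ε/2) • K :=
    bd_mem_smul_of_gauge_lt hbal haz (by linarith)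
  have hp1 : (0:ℝ) < gauge K y + ε/2 := by have := gauge_nonneg (s := K) y; linarith
  have hp2 : (0:ℝ) < gauge K z + ε/2 := by have := gauge_nonneg (s := K) z; linarith
  have := bd_add_mem_smul hconv hp1 hp2 h1 h2
  have := gauge_le_of_mem (by linarith : (0:ℝ) ≤ (gauge K y + ε/2) + (gauge K z + ε/2)) this
  linarith

end helpers2

section helpers3
variable {𝕜 : Type*} [RCLike 𝕜] {X : Type*} [AddCommGroup X] [Module 𝕜 X]
    [Module ℝ X] [IsScalarTower ℝ 𝕜 X]
    [UniformSpace X] [IsUniformAddGroup X] [ContinuousSMul 𝕜 X] [LocallyConvexSpace ℝ X]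

lemma bd_continuousSMul_real (𝕜' : Type*) [RCLike 𝕜'] [Module 𝕜' X] [IsScalarTower ℝ 𝕜' X]
    [ContinuousSMul 𝕜' X] : ContinuousSMul ℝ X := by
  constructor
  have : (fun p : ℝ × X => p.1 • p.2) = fun p : ℝ × X => ((p.1 : 𝕜')) • p.2 := by
    funext p; exact bd_real_smul _ _
  rw [this]
  exact ((RCLike.continuous_ofReal).comp continuous_fst).smul continuous_snd

lemma bd_absconv_basis (U : Set X) (hU : U ∈ 𝓝 (0:X)) :
    ∃ V ∈ 𝓝 (0:X), Balanced 𝕜 V ∧ Convex ℝ V ∧ V ⊆ U := by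
  haveI := bd_smulCommClass (𝕜 := 𝕜) (X := X)
  obtain ⟨W, ⟨hW, hWc⟩, hWU⟩ := (LocallyConvexSpace.convex_basis_zero ℝ X).mem_iff.1 hU
  refine ⟨balancedCore 𝕜 W, balancedCore_mem_nhds_zero hW, balancedCore_balanced W, ?_,
    (balancedCore_subset W).trans hWU⟩
  rw [balancedCore_eq_iInter (mem_of_mem_nhds hW)]
  refine convex_iInter₂ fun r _ => ?_
  rintro _ ⟨w₁, hw₁, rfl⟩ _ ⟨w₂, hw₂, rfl⟩ a b ha hb hab
  refine ⟨a • w₁ + b • w₂, hWc hw₁ hw₂ ha hb hab, ?_⟩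
  show r • (a • w₁ + b • w₂) = a • r • w₁ + b • r • w₂
  rw [smul_add, (smul_comm a r w₁).symm, (smul_comm b r w₂).symm]

lemma bd_neg_cl0 {w : X} (hw : w ∈ closure ({0} : Set X)) : -w ∈ closure ({0} : Set X) := by
  have := (Homeomorph.neg X).image_closure ({0} : Set X)
  have h : -w ∈ Homeomorph.neg X '' closure ({0} : Set X) := ⟨w, hw, rfl⟩
  rw [this] at h
  simpa using h

lemma bd_nhds_eq_cl0 {w : X} (hw : w ∈ closure ({0} : Set X)) : 𝓝 w = 𝓝 (0:X) := by
  have h0w : (0:X) ∈ closure ({w} : Set X) := by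
    have him := (Homeomorph.addLeft w).image_closure ({0} : Set X)
    have : (0:X) ∈ Homeomorph.addLeft w '' closure ({0} : Set X) :=
      ⟨-w, bd_neg_cl0 hw, by simp⟩
    rw [him] at this
    simpa using this
  have h1 : w ⤳ (0:X) := specializes_iff_mem_closure.mpr h0w
  have h2 : (0:X) ⤳ w := specializes_iff_mem_closure.mpr hw
  exact le_antisymm h1 h2

lemma bd_nhds_add_cl0 {w : X} (hw : w ∈ closure ({0} : Set X)) (p : X) :
    𝓝 (p + w) = 𝓝 p := by
  rw [← map_add_left_nhds_zero p, ← bd_nhds_eq_cl0 hw, map_add_left_nhds]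

lemma bd_cl0_compact : IsCompact (closure ({0} : Set X)) := by
  rw [isCompact_iff_ultrafilter_le_nhds]
  intro f hf
  refine ⟨0, subset_closure rfl, ?_⟩
  intro V hV
  have : closure ({0} : Set X) ⊆ V := by
    intro z hz
    exact mem_of_mem_nhds (by rwa [bd_nhds_eq_cl0 hz])
  exact Filter.mem_of_superset (hf (Filter.mem_principal_self _)) this

lemma bd_sub_mem_cl0 {p q : X} (h : (𝓝 p ⊓ 𝓝 q).NeBot) : p - q ∈ closure ({0} : Set X) := by
  rw [mem_closure_iff]
  intro U hUopen hUmem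
  have hU : U ∈ 𝓝 (p - q) := hUopen.mem_nhds hUmem
  have hcont : Filter.Tendsto (fun zw : X × X => zw.1 - zw.2) (𝓝 p ×ˢ 𝓝 q) (𝓝 (p - q)) := by
    have : Filter.Tendsto (fun zw : X × X => zw.1 - zw.2) (𝓝 (p, q)) (𝓝 (p - q)) :=
      (continuous_fst.sub continuous_snd).continuousAt
    rwa [nhds_prod_eq] at this
  have hmem : (fun zw : X × X => zw.1 - zw.2) ⁻¹' U ∈ 𝓝 p ×ˢ 𝓝 q := hcont hU
  rw [Filter.mem_prod_iff] at hmem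
  obtain ⟨A, hA, Bs, hB, hsub⟩ := hmem
  have hAB : (A ∩ Bs).Nonempty :=
    Filter.nonempty_of_mem (Filter.inter_mem (Filter.mem_inf_of_left hA)
      (Filter.mem_inf_of_right hB))
  obtain ⟨z, hzA, hzB⟩ := hAB
  have h0U : (0:X) ∈ U := by
    have := hsub (Set.mk_mem_prod hzA hzB)
    simpa using this
  exact ⟨0, h0U, rfl⟩

lemma bd_closure_subset_add (S V : Set X) (hV : V ∈ 𝓝 (0:X)) (hbal : Balanced 𝕜 V) :
    closure S ⊆ S + V := by
  intro z hz
  have hzV : (fun v => z + v) '' V ∈ 𝓝 z := by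
    rw [← map_add_left_nhds_zero z]
    exact Filter.image_mem_map hV
  obtain ⟨v, hv1, hv2⟩ := mem_closure_iff_nhds.mp hz _ hzV
  obtain ⟨v₀, hv₀, rfl⟩ := hv1
  exact ⟨z + v₀, hv2, -v₀, hbal.neg_mem_iff.mpr hv₀, by show z + v₀ + -v₀ = z; abel⟩

end helpers3

section helpers4
variable {𝕜 : Type*} [RCLike 𝕜] {X : Type*} [AddCommGroup X] [Module 𝕜 X]
    [Module ℝ X] [IsScalarTower ℝ 𝕜 X]
    [UniformSpace X] [IsUniformAddGroup X] [ContinuousSMul 𝕜 X] [LocallyConvexSpace ℝ X]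

lemma bd_tail_small {a : ℕ → ℝ} (ha : Summable a) (h0 : ∀ n, 0 ≤ a n) {ε : ℝ} (hε : 0 < ε) :
    ∃ N, ∀ s : Finset ℕ, (∀ n ∈ s, N ≤ n) → ∑ n ∈ s, a n < ε := by
  have htend := ha.hasSum.tendsto_sum_nat
  have : ∀ᶠ N in atTop, (∑' n, a n) - ∑ n ∈ Finset.range N, a n < ε := by
    have := htend.eventually (eventually_gt_nhds (show (∑' n, a n) - ε < ∑' n, a n by linarith))
    filter_upwards [this] with N hN
    linarith
  obtain ⟨N, hN⟩ := this.exists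
  refine ⟨N, fun s hs => ?_⟩
  have hdisj : Disjoint (Finset.range N) s := by
    rw [Finset.disjoint_left]
    intro n hn hns
    exact absurd (hs n hns) (by simpa using Finset.mem_range.mp hn)
  have hsum : ∑ n ∈ Finset.range N, a n + ∑ n ∈ s, a n = ∑ n ∈ Finset.range N ∪ s, a n :=
    (Finset.sum_union hdisj).symm
  have hle : ∑ n ∈ Finset.range N ∪ s, a n ≤ ∑' n, a n :=
    Summable.sum_le_tsum _ (fun i _ => h0 i) ha
  linarith

lemma bd_exists_hasSum
    (hseq : ∀ u : ℕ → X, CauchySeq u → ∃ l : X, Filter.Tendsto u Filter.atTop (nhds l))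
    (x : ℕ → X) (hx : Filter.Tendsto x Filter.atTop (nhds 0))
    (a : ℕ → 𝕜) (hsum : Summable fun n => ‖a n‖) (hle : (∑' n, ‖a n‖) ≤ 1) :
    ∃ y, HasSum (fun n => a n • x n) y := by
  set p : ℕ → X := fun M => ∑ n ∈ Finset.range M, a n • x n with hp
  -- key: sums over finsets of large indices lie in any abs convex nbhd
  have key : ∀ (V : Set X), V ∈ 𝓝 (0:X) → Balanced 𝕜 V → Convex ℝ V →
      ∃ N₁, ∀ s : Finset ℕ, (∀ n ∈ s, N₁ ≤ n) → (∑ n ∈ s, a n • x n) ∈ V := by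
    intro V hV hVb hVc
    obtain ⟨N₁, hN₁⟩ := Filter.mem_atTop_sets.mp (hx hV)
    refine ⟨N₁, fun s hs => ?_⟩
    refine bd_sum_mem hVb hVc (mem_of_mem_nhds hV) s a x
      (fun n hn => hN₁ n (hs n hn)) ?_
    exact le_trans (Summable.sum_le_tsum _ (fun i _ => norm_nonneg _) hsum) hle
  have hcauchy : CauchySeq p := by
    rw [cauchySeq_iff]
    intro V hV
    rw [uniformity_eq_comap_nhds_zero X, Filter.mem_comap] at hV
    obtain ⟨W, hW, hWV⟩ := hV
    obtain ⟨V', hV', hV'b, hV'c, hV'W⟩ := bd_absconv_basis (𝕜 := 𝕜) W hW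
    obtain ⟨N₁, hN₁⟩ := key V' hV' hV'b hV'c
    have claim : ∀ k l, N₁ ≤ k → k ≤ l → p l - p k ∈ V' := by
      intro k l hk hkl
      have hsub : Finset.range k ⊆ Finset.range l := Finset.range_subset_range.mpr hkl
      have : p l - p k = ∑ n ∈ Finset.range l \ Finset.range k, a n • x n :=
        (Finset.sum_sdiff_eq_sub hsub).symm
      rw [this]
      refine hN₁ _ fun n hn => ?_
      rw [Finset.mem_sdiff, Finset.mem_range, Finset.mem_range] at hn
      exact le_trans hk (not_lt.mp hn.2)
    refine ⟨N₁, fun k hk l hl => ?_⟩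
    apply hWV
    rcases le_total k l with h | h
    · exact hV'W (claim k l hk h)
    · have := claim l k hl h
      have : -(p k - p l) ∈ V' := hV'b.neg_mem_iff.mpr this
      simpa using hV'W (by simpa using this)
  obtain ⟨y, hy⟩ := hseq p hcauchy
  refine ⟨y, ?_⟩
  rw [HasSum, SummationFilter.unconditional_filter, Filter.tendsto_atTop']
  intro U hU
  have hWmem : (fun w => y + w) ⁻¹' U ∈ 𝓝 (0:X) := by
    have : U ∈ map (fun w => y + w) (𝓝 (0:X)) := by rwa [map_add_left_nhds_zero]
    exact this
  obtain ⟨A, hA, hAhalf⟩ := exists_nhds_zero_half hWmem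
  obtain ⟨V', hV', hV'b, hV'c, hV'A⟩ := bd_absconv_basis (𝕜 := 𝕜) A hA
  obtain ⟨N₁, hN₁⟩ := key V' hV' hV'b hV'c
  -- choose M ≥ N₁ with p M - y ∈ V'
  have him : (fun w => y + w) '' V' ∈ 𝓝 y := by
    rw [← map_add_left_nhds_zero y]
    exact Filter.image_mem_map hV'
  have hev : ∀ᶠ M in atTop, p M ∈ (fun w => y + w) '' V' ∧ N₁ ≤ M :=
    (hy.eventually_mem him).and (eventually_ge_atTop N₁)
  obtain ⟨M, ⟨v, hvV, hveq⟩, hMN⟩ := hev.exists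
  have hpMy : p M - y ∈ V' := by
    have : p M - y = v := by rw [← hveq]; show y + v - y = v; abel
    rwa [this]
  refine ⟨Finset.range M, fun s hs => ?_⟩
  have h1 : ∑ n ∈ s, a n • x n - p M = ∑ n ∈ s \ Finset.range M, a n • x n :=
    (Finset.sum_sdiff_eq_sub hs).symm
  have h1mem : ∑ n ∈ s, a n • x n - p M ∈ V' := by
    rw [h1]
    refine hN₁ _ fun n hn => ?_
    rw [Finset.mem_sdiff, Finset.mem_range] at hn
    exact le_trans hMN (not_lt.mp hn.2)
  have hW : (∑ n ∈ s, a n • x n - p M) + (p M - y) ∈ (fun w => y + w) ⁻¹' U :=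
    hAhalf _ (hV'A h1mem) _ (hV'A hpMy)
  have heq : y + ((∑ n ∈ s, a n • x n - p M) + (p M - y)) = ∑ n ∈ s, a n • x n := by abel
  have := hW
  rw [Set.mem_preimage, heq] at this
  exact this
end helpers4

section helpers5
variable {𝕜 : Type*} [RCLike 𝕜] {X : Type*} [AddCommGroup X] [Module 𝕜 X]
    [Module ℝ X] [IsScalarTower ℝ 𝕜 X]
    [UniformSpace X] [IsUniformAddGroup X] [ContinuousSMul 𝕜 X] [LocallyConvexSpace ℝ X]

lemma bd_five (W : Set X) (hW : W ∈ 𝓝 (0:X)) :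
    ∃ V ∈ 𝓝 (0:X), Balanced 𝕜 V ∧ Convex ℝ V ∧
      ∀ v₁ ∈ V, ∀ v₂ ∈ V, ∀ v₃ ∈ V, ∀ v₄ ∈ V, ∀ v₅ ∈ V, ((v₁+v₂)+(v₃+v₄))+v₅ ∈ W := by
  obtain ⟨A, hA, hAW⟩ := exists_nhds_zero_half hW
  obtain ⟨A₂, hA₂, hA₂A⟩ := exists_nhds_zero_half hA
  obtain ⟨A₃, hA₃, hA₃A₂⟩ := exists_nhds_zero_half hA₂
  obtain ⟨V, hV, hVb, hVc, hVsub⟩ := bd_absconv_basis (𝕜 := 𝕜) (A ∩ A₃)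
    (Filter.inter_mem hA hA₃)
  refine ⟨V, hV, hVb, hVc, fun v₁ h₁ v₂ h₂ v₃ h₃ v₄ h₄ v₅ h₅ => ?_⟩
  have hVA : V ⊆ A := fun v hv => (hVsub hv).1
  have hVA₃ : V ⊆ A₃ := fun v hv => (hVsub hv).2
  exact hAW _ (hA₂A _ (hA₃A₂ _ (hVA₃ h₁) _ (hVA₃ h₂)) _ (hA₃A₂ _ (hVA₃ h₃) _ (hVA₃ h₄)))
    _ (hVA h₅)

end helpers5


noncomputable section

/-- The Banach-disk property: `D` is bounded, convex, balanced, and the span of `D`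
is complete with respect to the Minkowski gauge norm `p_D` of `D`. -/
def IsBanachDisk (𝕜 : Type*) [RCLike 𝕜] {X : Type*} [AddCommGroup X] [Module 𝕜 X]
    [Module ℝ X] [TopologicalSpace X] (D : Set X) : Prop :=
  Bornology.IsVonNBounded 𝕜 D ∧ Convex ℝ D ∧ Balanced 𝕜 D ∧
  ∀ u : ℕ → X, (∀ n, u n ∈ Submodule.span 𝕜 D) →
    (∀ ε : ℝ, 0 < ε → ∃ N, ∀ m, N ≤ m → ∀ n, N ≤ n → gauge D (u m - u n) < ε) →
    ∃ y ∈ Submodule.span 𝕜 D,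
      Filter.Tendsto (fun n => gauge D (y - u n)) Filter.atTop (nhds 0)

/-- Lemma l11: for a null sequence `(xₙ)` in a sequentially complete
locally convex space, the set `K` of sums `Σ aₙ xₙ` over `a ∈ ℓ¹`, `‖a‖₁ ≤ 1`, is a
(compact) Banach disk, and the linear span of `{xₙ}` is dense in the Banach space
`X_K`. -/
theorem banach_disk_from_null_sequence
    (𝕜 : Type*) [RCLike 𝕜] (X : Type*) [AddCommGroup X] [Module 𝕜 X]
    [Module ℝ X] [IsScalarTower ℝ 𝕜 X]
    -- X is a locally convex TVS
    [UniformSpace X] [IsUniformAddGroup X] [ContinuousSMul 𝕜 X]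
    [LocallyConvexSpace ℝ X]
    -- X is sequentially complete
    (hseq : ∀ u : ℕ → X, CauchySeq u → ∃ l : X, Filter.Tendsto u Filter.atTop (nhds l))
    -- a null sequence
    (x : ℕ → X) (hx : Filter.Tendsto x Filter.atTop (nhds 0))
    -- the set K = { Σ aₙ xₙ : a ∈ ℓ¹, ‖a‖₁ ≤ 1 }
    (K : Set X)
    (hK : K = {y : X | ∃ a : ℕ → 𝕜, (Summable fun n => ‖a n‖) ∧
      (∑' n, ‖a n‖) ≤ 1 ∧ HasSum (fun n => a n • x n) y}) :
    IsCompact K ∧ IsBanachDisk 𝕜 K ∧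
    ∀ y ∈ Submodule.span 𝕜 K, ∀ ε : ℝ, 0 < ε →
      ∃ z ∈ Submodule.span 𝕜 (Set.range x), gauge K (y - z) < ε := by
  haveI hscc : SMulCommClass ℝ 𝕜 X := bd_smulCommClass
  haveI : ContinuousSMul ℝ X := bd_continuousSMul_real 𝕜
  have hmem : ∀ (y : X) (a : ℕ → 𝕜), (Summable fun n => ‖a n‖) → (∑' n, ‖a n‖) ≤ 1 →
      HasSum (fun n => a n • x n) y → y ∈ K := by
    intro y a h1 h2 h3; rw [hK]; exact ⟨a, h1, h2, h3⟩
  -- 0 ∈ K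
  have hzero_hasSum : ∀ w : X, w ∈ closure ({0} : Set X) →
      HasSum (fun n => (0:𝕜) • x n) w := by
    intro w hw
    have : (fun n : ℕ => (0:𝕜) • x n) = fun _ => (0:X) := by funext n; simp
    rw [HasSum, this]
    simp only [Finset.sum_const_zero]
    rw [bd_nhds_eq_cl0 hw]
    exact tendsto_const_nhds
  have h0K : (0:X) ∈ K :=
    hmem 0 0 (by simpa using summable_zero) (by simp)
      (hzero_hasSum 0 (subset_closure rfl))
  have hcl0K : closure ({0} : Set X) ⊆ K := fun w hw =>
    hmem w 0 (by simpa using summable_zero) (by simp) (hzero_hasSum w hw)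
  -- balanced
  have hKbal : Balanced 𝕜 K := by
    intro c hc z hz
    obtain ⟨y, hy, rfl⟩ := hz
    rw [hK] at hy
    obtain ⟨a, h1, h2, h3⟩ := hy
    have hnn : (fun n => ‖c * a n‖) = fun n => ‖c‖ * ‖a n‖ := by
      funext n; rw [norm_mul]
    refine hmem _ (fun n => c * a n) ?_ ?_ ?_
    · rw [hnn]; exact h1.mul_left _
    · rw [hnn, tsum_mul_left]
      calc ‖c‖ * ∑' n, ‖a n‖ ≤ 1 * 1 :=
            mul_le_mul hc h2 (tsum_nonneg fun n => norm_nonneg _) zero_le_one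
        _ = 1 := one_mul 1
    · have hexp : (fun n => (c * a n) • x n) = fun n => c • (a n • x n) := by
        funext n; rw [mul_smul]
      rw [hexp]
      exact h3.const_smul c
  -- convex
  have hKconv : Convex ℝ K := by
    intro y hy z hz t s ht hs hts
    rw [hK] at hy hz
    obtain ⟨a, ha1, ha2, ha3⟩ := hy
    obtain ⟨b, hb1, hb2, hb3⟩ := hz
    set c : ℕ → 𝕜 := fun n => ((t:𝕜)) * a n + ((s:𝕜)) * b n with hc
    have hnorm : ∀ n, ‖c n‖ ≤ t * ‖a n‖ + s * ‖b n‖ := by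
      intro n
      calc ‖c n‖ ≤ ‖(t:𝕜) * a n‖ + ‖(s:𝕜) * b n‖ := norm_add_le _ _
        _ = t * ‖a n‖ + s * ‖b n‖ := by
            rw [norm_mul, norm_mul, RCLike.norm_ofReal, RCLike.norm_ofReal,
              abs_of_nonneg ht, abs_of_nonneg hs]
    have hg : Summable (fun n => t * ‖a n‖ + s * ‖b n‖) := (ha1.mul_left t).add (hb1.mul_left s)
    have hsc : Summable fun n => ‖c n‖ :=
      Summable.of_nonneg_of_le (fun n => norm_nonneg _) hnorm hg
    refine hmem _ c hsc ?_ ?_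
    · calc ∑' n, ‖c n‖ ≤ ∑' n, (t * ‖a n‖ + s * ‖b n‖) := Summable.tsum_le_tsum hnorm hsc hg
        _ = t * ∑' n, ‖a n‖ + s * ∑' n, ‖b n‖ := by
            rw [Summable.tsum_add (ha1.mul_left t) (hb1.mul_left s), tsum_mul_left, tsum_mul_left]
        _ ≤ t * 1 + s * 1 := add_le_add (mul_le_mul_of_nonneg_left ha2 ht)
            (mul_le_mul_of_nonneg_left hb2 hs)
        _ = 1 := by rw [mul_one, mul_one, hts]
    · have hexp : (fun n => c n • x n)
          = fun n => ((t:𝕜)) • (a n • x n) + ((s:𝕜)) • (b n • x n) := by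
        funext n; rw [hc]; show ((t:𝕜) * a n + (s:𝕜) * b n) • x n = _
        rw [add_smul, mul_smul, mul_smul]
      rw [hexp, bd_real_smul (𝕜 := 𝕜) t y, bd_real_smul (𝕜 := 𝕜) s z]
      exact (ha3.const_smul ((t:𝕜))).add (hb3.const_smul ((s:𝕜)))
  -- range x ⊆ K
  have hrangeK : Set.range x ⊆ K := by
    rintro _ ⟨m, rfl⟩
    classical
    have hnorm : (fun n => ‖if n = m then (1:𝕜) else 0‖)
        = fun n => if n = m then (1:ℝ) else 0 := by
      funext n; by_cases h : n = m <;> simp [h]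
    refine hmem _ (fun n => if n = m then (1:𝕜) else 0) ?_ ?_ ?_
    · rw [hnorm]; exact (hasSum_ite_eq m (1:ℝ)).summable
    · rw [hnorm, (hasSum_ite_eq m (1:ℝ)).tsum_eq]
    · have hexp : (fun n => (if n = m then (1:𝕜) else 0) • x n)
          = fun n => if n = m then x m else 0 := by
        funext n; by_cases h : n = m <;> simp [h]
      rw [hexp]
      exact hasSum_ite_eq m (x m)
  -- the ℓ¹ ball
  set B : Set (ℕ → 𝕜) := {a | (Summable fun n => ‖a n‖) ∧ (∑' n, ‖a n‖) ≤ 1} with hBdef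
  have hBcompact : IsCompact B := by
    have hsub : B ⊆ Set.pi Set.univ (fun _ : ℕ => Metric.closedBall (0:𝕜) 1) := by
      intro a ha n _
      rw [Metric.mem_closedBall, dist_zero_right]
      exact le_trans (Summable.le_tsum ha.1 n fun j _ => norm_nonneg _) ha.2
    have hclosed : IsClosed B := by
      have hBeq : B = ⋂ (s : Finset ℕ), {a : ℕ → 𝕜 | ∑ n ∈ s, ‖a n‖ ≤ 1} := by
        ext a
        simp only [Set.mem_iInter, Set.mem_setOf_eq, hBdef]
        constructor
        · rintro ⟨h1, h2⟩ s
          exact le_trans (Summable.sum_le_tsum s (fun i _ => norm_nonneg _) h1) h2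
        · intro h
          have hsum : Summable fun n => ‖a n‖ :=
            summable_of_sum_le (Pi.le_def.mpr fun n => norm_nonneg _) h
          exact ⟨hsum, Summable.tsum_le_of_sum_le hsum h⟩
      rw [hBeq]
      exact isClosed_iInter fun s => isClosed_le
        (continuous_finset_sum s fun n _ => (continuous_apply n).norm) continuous_const
    exact (isCompact_univ_pi fun _ => isCompact_closedBall 0 1).of_isClosed_subset hclosed hsub
  have hex : ∀ a ∈ B, ∃ y, HasSum (fun n => a n • x n) y := fun a ha =>
    bd_exists_hasSum hseq x hx a ha.1 ha.2
  choose! Φ hΦ using hex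
  have hcont : ContinuousOn Φ B := by
    intro a ha
    rw [ContinuousWithinAt, Filter.tendsto_def]
    intro U hU
    have hWmem : (fun w => Φ a + w) ⁻¹' U ∈ 𝓝 (0:X) := by
      rw [← map_add_left_nhds_zero (Φ a)] at hU; exact hU
    obtain ⟨V, hV, hVb, hVc, hfive⟩ := bd_five (𝕜 := 𝕜) _ hWmem
    obtain ⟨N, hN⟩ := Filter.mem_atTop_sets.mp (hx hV)
    set P : (ℕ → 𝕜) → X := fun b => ∑ n ∈ Finset.range N, b n • x n with hPdef
    have htail : ∀ b ∈ B, Φ b - P b ∈ closure V := by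
      intro b hb
      have htd : Filter.Tendsto (fun M => (∑ n ∈ Finset.range M, b n • x n) - P b)
          Filter.atTop (𝓝 (Φ b - P b)) := ((hΦ b hb).tendsto_sum_nat).sub_const _
      refine mem_closure_of_tendsto htd ?_
      filter_upwards [Filter.eventually_ge_atTop N] with M hM
      have hsub : Finset.range N ⊆ Finset.range M := Finset.range_subset_range.mpr hM
      have heq : (∑ n ∈ Finset.range M, b n • x n) - P b
          = ∑ n ∈ Finset.range M \ Finset.range N, b n • x n :=
        (Finset.sum_sdiff_eq_sub hsub).symm
      rw [heq]
      refine bd_sum_mem hVb hVc (mem_of_mem_nhds hV) _ b x (fun n hn => ?_) ?_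
      · rw [Finset.mem_sdiff, Finset.mem_range, Finset.mem_range] at hn
        exact hN n (not_lt.mp hn.2)
      · exact le_trans (Summable.sum_le_tsum _ (fun i _ => norm_nonneg _) hb.1) hb.2
    have hPcont : Continuous P :=
      continuous_finset_sum _ fun n _ => (continuous_apply n).smul continuous_const
    have hPev : ∀ᶠ b in 𝓝[B] a, P b - P a ∈ V := by
      have h1 : (fun w => P a + w) '' V ∈ 𝓝 (P a) := by
        rw [← map_add_left_nhds_zero (P a)]; exact Filter.image_mem_map hV
      have h2 := ((hPcont.tendsto a).eventually_mem h1).filter_mono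
        (nhdsWithin_le_nhds : 𝓝[B] a ≤ 𝓝 a)
      filter_upwards [h2] with b hb
      obtain ⟨v, hv, hveq⟩ := hb
      have : P b - P a = v := by rw [← hveq]; show P a + v - P a = v; abel
      rwa [this]
    have hBev : ∀ᶠ b in 𝓝[B] a, b ∈ B := self_mem_nhdsWithin
    have hfinal : ∀ᶠ b in 𝓝[B] a, Φ b ∈ U := by
      filter_upwards [hPev, hBev] with b h1 h2
      have hclsub : closure V ⊆ V + V := bd_closure_subset_add (𝕜 := 𝕜) V V hV hVb
      obtain ⟨c₁, hc₁, c₂, hc₂, hq1eq⟩ := hclsub (htail b h2)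
      have hq3 : P a - Φ a ∈ closure V := by
        have hneg : -(Φ a - P a) ∈ closure V := (hVb.closure).neg_mem_iff.mpr (htail a ha)
        simpa using hneg
      obtain ⟨c₃, hc₃, c₄, hc₄, hq3eq⟩ := hclsub hq3
      have hsum := hfive c₁ hc₁ c₂ hc₂ c₃ hc₃ c₄ hc₄ (P b - P a) h1
      have hq1eq' : c₁ + c₂ = Φ b - P b := hq1eq
      have hq3eq' : c₃ + c₄ = P a - Φ a := hq3eq
      have heq : ((c₁ + c₂) + (c₃ + c₄)) + (P b - P a) = Φ b - Φ a := by
        rw [hq1eq', hq3eq']; abel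
      rw [heq] at hsum
      have hU' : Φ a + (Φ b - Φ a) ∈ U := hsum
      rwa [show Φ a + (Φ b - Φ a) = Φ b by rw [add_comm]; exact sub_add_cancel _ _] at hU'
    exact hfinal
  have hKeq : K = (Φ '' B) + closure ({0} : Set X) := by
    apply Set.Subset.antisymm
    · intro y hy
      rw [hK] at hy
      obtain ⟨a, h1, h2, h3⟩ := hy
      have haB : a ∈ B := ⟨h1, h2⟩
      have hF1 : Filter.map (fun s : Finset ℕ => ∑ n ∈ s, a n • x n) Filter.atTop ≤ 𝓝 y := h3
      have hF2 : Filter.map (fun s : Finset ℕ => ∑ n ∈ s, a n • x n) Filter.atTop ≤ 𝓝 (Φ a) :=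
        hΦ a haB
      haveI : (Filter.map (fun s : Finset ℕ => ∑ n ∈ s, a n • x n) Filter.atTop).NeBot :=
        map_neBot
      have hne : (𝓝 y ⊓ 𝓝 (Φ a)).NeBot := this.mono (le_inf hF1 hF2)
      have hw := bd_sub_mem_cl0 hne
      exact ⟨Φ a, ⟨a, haB, rfl⟩, y - Φ a, hw, by show Φ a + (y - Φ a) = y; rw [add_comm]; exact sub_add_cancel y (Φ a)⟩
    · rintro z ⟨φ, ⟨a, ha, rfl⟩, w, hw, rfl⟩
      refine hmem _ a ha.1 ha.2 ?_
      rw [HasSum, bd_nhds_add_cl0 hw]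
      exact hΦ a ha
  have hKcomp : IsCompact K := by
    rw [hKeq]
    exact (hBcompact.image_of_continuousOn hcont).add bd_cl0_compact
  -- elements of the span are absorbed by K
  have habs_span : ∀ y ∈ Submodule.span 𝕜 K, ∃ t : ℝ, 0 < t ∧ y ∈ t • K := by
    intro y hy
    induction hy using Submodule.span_induction with
    | mem z hz => exact ⟨1, one_pos, ⟨z, hz, one_smul ℝ z⟩⟩
    | zero => exact ⟨1, one_pos, ⟨0, h0K, smul_zero 1⟩⟩
    | add y z hysp hzsp ihy ihz =>
        obtain ⟨t, ht, hyt⟩ := ihy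
        obtain ⟨s, hs, hzs⟩ := ihz
        exact ⟨t + s, by linarith, bd_add_mem_smul hKconv ht hs hyt hzs⟩
    | smul c z hzsp ih =>
        obtain ⟨t, ht, hzt⟩ := ih
        by_cases hc : c = 0
        · exact ⟨1, one_pos, by rw [hc, zero_smul]; exact ⟨0, h0K, smul_zero 1⟩⟩
        · obtain ⟨k, hk, rfl⟩ := hzt
          have hcpos : (0:ℝ) < ‖c‖ := norm_pos_iff.mpr hc
          have hknorm : ‖(((‖c‖⁻¹ : ℝ) : 𝕜) * c)‖ ≤ 1 := by
            rw [norm_mul, RCLike.norm_ofReal, abs_of_nonneg (inv_nonneg.mpr hcpos.le),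
              inv_mul_cancel₀ (ne_of_gt hcpos)]
          have hk' : ((((‖c‖⁻¹ : ℝ) : 𝕜) * c) • k) ∈ K :=
            hKbal _ hknorm ⟨k, hk, rfl⟩
          refine ⟨t * ‖c‖, mul_pos ht hcpos, ⟨(((‖c‖⁻¹ : ℝ) : 𝕜) * c) • k, hk', ?_⟩⟩
          show (t * ‖c‖) • ((((‖c‖⁻¹ : ℝ) : 𝕜) * c) • k) = c • t • k
          rw [bd_real_smul (𝕜 := 𝕜) (t * ‖c‖), smul_smul,
            bd_real_smul (𝕜 := 𝕜) t k, smul_smul]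
          congr 1
          have hcn : ((‖c‖ : ℝ) : 𝕜) ≠ 0 := by
            simpa using ne_of_gt hcpos
          push_cast
          field_simp
  -- gauge vanishes on closure {0}
  have hgauge_cl0 : ∀ w ∈ closure ({0} : Set X), gauge K w = 0 := by
    intro w hw
    refine le_antisymm ?_ (gauge_nonneg _)
    refine le_of_forall_pos_le_add fun ε hε => ?_
    have hmemε : w ∈ ε • K := by
      have hwK : (ε⁻¹ • w) ∈ K := by
        apply hcl0K
        have h1 : ε⁻¹ • w ∈ (fun v : X => ε⁻¹ • v) '' closure ({0}:Set X) := ⟨w, hw, rfl⟩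
        have h2 := image_closure_subset_closure_image
          (f := fun v : X => ε⁻¹ • v) (s := ({0}:Set X)) (continuous_const_smul _) h1
        simpa using h2
      exact ⟨ε⁻¹ • w, hwK, by show ε • (ε⁻¹ • w) = w; rw [smul_smul, mul_inv_cancel₀ (ne_of_gt hε), one_smul]⟩
    have := gauge_le_of_mem hε.le hmemε
    linarith
  have hKspan : K ⊆ (Submodule.span 𝕜 K : Set X) := Submodule.subset_span
  have hsmulspan : ∀ (t : ℝ) (z : X), z ∈ t • K → z ∈ Submodule.span 𝕜 K := by
    intro t z hz
    obtain ⟨k, hk, rfl⟩ := hz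
    show t • k ∈ Submodule.span 𝕜 K
    rw [bd_real_smul (𝕜 := 𝕜)]
    exact Submodule.smul_mem _ _ (hKspan hk)
  -- completeness
  have hcomplete : ∀ u : ℕ → X, (∀ n, u n ∈ Submodule.span 𝕜 K) →
      (∀ ε : ℝ, 0 < ε → ∃ N, ∀ m, N ≤ m → ∀ n, N ≤ n → gauge K (u m - u n) < ε) →
      ∃ y ∈ Submodule.span 𝕜 K,
        Filter.Tendsto (fun n => gauge K (y - u n)) Filter.atTop (nhds 0) := by
    intro u hu hcau
    have hdiff : ∀ ε : ℝ, 0 < ε → ∃ N, ∀ m, N ≤ m → ∀ n, N ≤ n → u m - u n ∈ ε • K := by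
      intro ε hε
      obtain ⟨N, hN⟩ := hcau ε hε
      refine ⟨N, fun m hm n hn => ?_⟩
      exact bd_mem_smul_of_gauge_lt hKbal
        (habs_span _ (Submodule.sub_mem _ (hu m) (hu n))) (hN m hm n hn)
    have hucauchy : CauchySeq u := by
      rw [cauchySeq_iff]
      intro Vent hVent
      rw [uniformity_eq_comap_nhds_zero X, Filter.mem_comap] at hVent
      obtain ⟨W, hW, hWV⟩ := hVent
      obtain ⟨V', hV', hV'b, hV'c, hV'W⟩ := bd_absconv_basis (𝕜 := 𝕜) W hW
      obtain ⟨r, hr, hrsub⟩ := ((hKcomp.totallyBounded.isVonNBounded 𝕜) hV').exists_pos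
      have hm1 : (0:ℝ) < max r 1 := lt_of_lt_of_le one_pos (le_max_right r 1)
      set c : 𝕜 := ((max r 1 : ℝ) : 𝕜) with hcdef
      have hcnorm : ‖c‖ = max r 1 := by rw [hcdef, RCLike.norm_ofReal, abs_of_pos hm1]
      have hKc : K ⊆ c • V' := hrsub c (by rw [hcnorm]; exact le_max_left r 1)
      have hεpos : (0:ℝ) < (max r 1)⁻¹ := inv_pos.mpr hm1
      obtain ⟨N, hN⟩ := hdiff _ hεpos
      have hsubV : (max r 1)⁻¹ • K ⊆ V' := by
        intro z hz
        obtain ⟨kk, hkk, rfl⟩ := hz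
        obtain ⟨v, hv, hveq⟩ := hKc hkk
        show (max r 1)⁻¹ • kk ∈ V'
        have heq : (max r 1)⁻¹ • kk = ((((max r 1)⁻¹ : ℝ):𝕜) * c) • v := by
          rw [← hveq]
          show (max r 1)⁻¹ • (c • v) = _
          rw [bd_real_smul (𝕜 := 𝕜) ((max r 1)⁻¹), smul_smul]
        rw [heq]
        refine hV'b _ ?_ ⟨v, hv, rfl⟩
        rw [norm_mul, RCLike.norm_ofReal, hcnorm, abs_of_pos (inv_pos.mpr hm1),
          inv_mul_cancel₀ (ne_of_gt hm1)]
      refine ⟨N, fun k hk l hl => ?_⟩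
      exact hWV (hV'W (hsubV (hN l hl k hk)))
    obtain ⟨y, hy⟩ := hseq u hucauchy
    have hkey : ∀ ε : ℝ, 0 < ε → ∃ N, ∀ n, N ≤ n →
        ∃ cc ∈ ε • K, ∃ w ∈ closure ({0}:Set X), y - u n = cc + w := by
      intro ε hε
      obtain ⟨N, hN⟩ := hdiff ε hε
      refine ⟨N, fun n hn => ?_⟩
      set v : ℕ → X := fun m => u (m + N) - u n with hvdef
      have hvmem : ∀ m, v m ∈ ε • K := fun m => hN (m+N) (Nat.le_add_left N m) n hn
      have hvle : Filter.map v Filter.atTop ≤ Filter.principal (ε • K) :=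
        Filter.le_principal_iff.mpr (Filter.mem_map.mpr (Filter.univ_mem' hvmem))
      haveI : (Filter.map v Filter.atTop).NeBot := map_neBot
      have hvt : Filter.Tendsto v Filter.atTop (𝓝 (y - u n)) :=
        (hy.comp (tendsto_add_atTop_nat N)).sub_const _
      obtain ⟨cpt, hcptmem, hclust⟩ := (hKcomp.smul ε) hvle
      have hne : (𝓝 cpt ⊓ 𝓝 (y - u n)).NeBot := hclust.mono hvt
      have hw := bd_sub_mem_cl0 hne
      refine ⟨cpt, hcptmem, (y - u n) - cpt, ?_, by abel⟩
      have := bd_neg_cl0 hw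
      simpa using this
    have hyspan : y ∈ Submodule.span 𝕜 K := by
      obtain ⟨N, hN⟩ := hkey 1 one_pos
      obtain ⟨cc, hcc, w, hw, heq⟩ := hN N le_rfl
      have h1 : y = u N + (cc + w) := by rw [← heq]; abel
      rw [h1]
      exact Submodule.add_mem _ (hu N) (Submodule.add_mem _ (hsmulspan 1 cc hcc)
        (Submodule.subset_span (hcl0K hw)))
    refine ⟨y, hyspan, ?_⟩
    rw [Metric.tendsto_atTop]
    intro ε hε
    obtain ⟨N, hN⟩ := hkey (ε/3) (by linarith)
    refine ⟨N, fun n hn => ?_⟩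
    obtain ⟨cc, hcc, w, hw, heq⟩ := hN n hn
    have hgc : gauge K cc ≤ ε/3 := gauge_le_of_mem (by linarith) hcc
    have hgw : gauge K w = 0 := hgauge_cl0 w hw
    have habsc : ∃ r' : ℝ, 0 < r' ∧ cc ∈ r' • K := ⟨ε/3, by linarith, hcc⟩
    have habsw : ∃ r' : ℝ, 0 < r' ∧ w ∈ r' • K := ⟨1, one_pos, ⟨w, hcl0K hw, one_smul ℝ w⟩⟩
    have hadd := bd_gauge_add_le hKconv hKbal habsc habsw
    rw [Real.dist_eq, sub_zero, abs_of_nonneg (gauge_nonneg _), heq]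
    calc gauge K (cc + w) ≤ gauge K cc + gauge K w := hadd
      _ ≤ ε/3 + 0 := by rw [hgw]; exact add_le_add_left hgc 0
      _ < ε := by linarith
  -- density
  have hdense : ∀ y ∈ Submodule.span 𝕜 K, ∀ ε : ℝ, 0 < ε →
      ∃ z ∈ Submodule.span 𝕜 (Set.range x), gauge K (y - z) < ε := by
    intro y hy
    induction hy using Submodule.span_induction with
    | mem k hk =>
        intro ε hε
        rw [hK] at hk
        obtain ⟨a, h1, h2, h3⟩ := hk
        obtain ⟨N, hN⟩ := bd_tail_small h1 (fun n => norm_nonneg _)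
          (show (0:ℝ) < ε/2 by linarith)
        classical
        set b : ℕ → 𝕜 := fun n => if n < N then 0 else a n with hbdef
        have hble : ∀ n, ‖b n‖ ≤ ‖a n‖ := by
          intro n; by_cases h : n < N <;> simp [hbdef, h]
        have hbsum : Summable fun n => ‖b n‖ :=
          Summable.of_nonneg_of_le (fun n => norm_nonneg _) hble h1
        have hbtail : ∑' n, ‖b n‖ ≤ ε/2 := by
          apply Summable.tsum_le_of_sum_le hbsum
          intro s
          have hz : ∀ n ∈ s, (fun n => ‖b n‖) n ≠ 0 → N ≤ n := by
            intro n _ hne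
            by_contra hlt
            simp [hbdef, not_le.mp hlt] at hne
          have heq := Finset.sum_filter_of_ne (f := fun n => ‖b n‖) (p := fun n => N ≤ n) hz
          rw [← heq]
          have heq2 : ∀ n ∈ s.filter (fun n => N ≤ n), ‖b n‖ = ‖a n‖ := by
            intro n hn
            rw [Finset.mem_filter] at hn
            simp [hbdef, not_lt.mpr hn.2]
          rw [Finset.sum_congr rfl heq2]
          exact le_of_lt (hN _ fun n hn => (Finset.mem_filter.mp hn).2)
        set z : X := ∑ n ∈ Finset.range N, a n • x n with hzdef
        have hzmem : z ∈ Submodule.span 𝕜 (Set.range x) :=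
          Submodule.sum_mem _ fun n _ =>
            Submodule.smul_mem _ _ (Submodule.subset_span ⟨n, rfl⟩)
        have hksum : HasSum (fun n => b n • x n) (k - z) := by
          have hfz : ∀ n ∉ Finset.range N, (if n < N then a n else 0) • x n = 0 := by
            intro n hn
            rw [Finset.mem_range, not_lt] at hn
            simp [not_lt.mpr hn]
          have hfin : HasSum (fun n => (if n < N then a n else 0) • x n)
              (∑ n ∈ Finset.range N, (if n < N then a n else 0) • x n) :=
            hasSum_sum_of_ne_finset_zero hfz
          have hzeq : (∑ n ∈ Finset.range N, (if n < N then a n else 0) • x n) = z := by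
            rw [hzdef]
            refine Finset.sum_congr rfl fun n hn => ?_
            rw [Finset.mem_range] at hn
            simp [hn]
          rw [hzeq] at hfin
          have hsub := h3.sub hfin
          have hfe : (fun n => a n • x n - (if n < N then a n else 0) • x n)
              = fun n => b n • x n := by
            funext n
            by_cases h : n < N <;> simp [hbdef, h]
          rwa [hfe] at hsub
        refine ⟨z, hzmem, ?_⟩
        have hmemε : k - z ∈ (ε/2) • K := by
          have hεh : (0:ℝ) < ε/2 := by linarith
          refine ⟨(ε/2)⁻¹ • (k - z), ?_, by
            show (ε/2) • ((ε/2)⁻¹ • (k - z)) = k - z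
            rw [smul_smul, mul_inv_cancel₀ (ne_of_gt hεh), one_smul]⟩
          refine hmem _ (fun n => ((((ε/2)⁻¹ : ℝ)):𝕜) * b n) ?_ ?_ ?_
          · have hne : (fun n => ‖(((ε/2)⁻¹ : ℝ):𝕜) * b n‖)
                = fun n => (ε/2)⁻¹ * ‖b n‖ := by
              funext n
              rw [norm_mul, RCLike.norm_ofReal, abs_of_pos (inv_pos.mpr hεh)]
            rw [hne]
            exact hbsum.mul_left _
          · have hne : (fun n => ‖(((ε/2)⁻¹ : ℝ):𝕜) * b n‖)
                = fun n => (ε/2)⁻¹ * ‖b n‖ := by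
              funext n
              rw [norm_mul, RCLike.norm_ofReal, abs_of_pos (inv_pos.mpr hεh)]
            rw [hne, tsum_mul_left]
            calc (ε/2)⁻¹ * ∑' n, ‖b n‖ ≤ (ε/2)⁻¹ * (ε/2) :=
                mul_le_mul_of_nonneg_left hbtail (inv_pos.mpr hεh).le
              _ = 1 := inv_mul_cancel₀ (ne_of_gt hεh)
          · have := hksum.const_smul ((((ε/2)⁻¹ : ℝ)):𝕜)
            have hgoal : HasSum (fun n => ((((ε/2)⁻¹ : ℝ)):𝕜) • (b n • x n))
                (((((ε/2)⁻¹ : ℝ)):𝕜) • (k - z)) := this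
            have hval : ((((ε/2)⁻¹ : ℝ)):𝕜) • (k - z) = (ε/2)⁻¹ • (k - z) :=
              (bd_real_smul _ _).symm
            rw [hval] at hgoal
            have hfe3 : (fun n => (((ε/2)⁻¹ : ℝ):𝕜) • (b n • x n))
                = fun n => ((((ε/2)⁻¹ : ℝ):𝕜) * b n) • x n := by
              funext n; rw [smul_smul]
            rwa [hfe3] at hgoal
        have := gauge_le_of_mem (by linarith : (0:ℝ) ≤ ε/2) hmemε
        linarith
    | zero =>
        intro ε hε
        exact ⟨0, Submodule.zero_mem _, by rw [sub_zero, gauge_zero]; exact hε⟩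
    | add y z hysp hzsp ihy ihz =>
        intro ε hε
        obtain ⟨z₁, hz₁, hg₁⟩ := ihy (ε/2) (by linarith)
        obtain ⟨z₂, hz₂, hg₂⟩ := ihz (ε/2) (by linarith)
        refine ⟨z₁ + z₂, Submodule.add_mem _ hz₁ hz₂, ?_⟩
        have heq : y + z - (z₁ + z₂) = (y - z₁) + (z - z₂) := by abel
        rw [heq]
        have hxsub : Submodule.span 𝕜 (Set.range x) ≤ Submodule.span 𝕜 K :=
          Submodule.span_mono hrangeK
        have hspan1 : y - z₁ ∈ Submodule.span 𝕜 K :=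
          Submodule.sub_mem _ hysp (hxsub hz₁)
        have hspan2 : z - z₂ ∈ Submodule.span 𝕜 K :=
          Submodule.sub_mem _ hzsp (hxsub hz₂)
        have := bd_gauge_add_le hKconv hKbal (habs_span _ hspan1) (habs_span _ hspan2)
        linarith
    | smul c z hzsp ih =>
        intro ε hε
        by_cases hc : c = 0
        · rw [hc, zero_smul]
          exact ⟨0, Submodule.zero_mem _, by rw [sub_zero, gauge_zero]; exact hε⟩
        · have hcpos : (0:ℝ) < ‖c‖ := norm_pos_iff.mpr hc
          obtain ⟨z₀, hz₀, hg₀⟩ := ih (ε / ‖c‖) (div_pos hε hcpos)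
          refine ⟨c • z₀, Submodule.smul_mem _ _ hz₀, ?_⟩
          have heq : c • z - c • z₀ = c • (z - z₀) := (smul_sub c z z₀).symm
          rw [heq, gauge_smul hKbal]
          calc ‖c‖ * gauge K (z - z₀) < ‖c‖ * (ε / ‖c‖) :=
              mul_lt_mul_of_pos_left hg₀ hcpos
            _ = ε := by field_simp
  exact ⟨hKcomp, ⟨(hKcomp.totallyBounded).isVonNBounded 𝕜, hKconv, hKbal, hcomplete⟩, hdense⟩
end
end

section
/- Let X be a separable Fréchet space over 𝕂 (𝕂 = ℝ or ℂ) and p a non-trivial continuous seminorm on X. Then for every countable dense subset A of X there exists a subset B of A such that B is p-independent and dense in X. -/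
noncomputable section

/-- The kernel of a seminorm, as a linear subspace. -/
def semKer {𝕜 X : Type*} [RCLike 𝕜] [AddCommGroup X] [Module 𝕜 X]
    (p : Seminorm 𝕜 X) : Submodule 𝕜 X where
  carrier := {x | p x = 0}
  zero_mem' := map_zero p
  add_mem' := by
    intro a b ha hb
    simp only [Set.mem_setOf_eq] at *
    have h := map_add_le_add p a b
    have h2 := apply_nonneg p (a + b)
    linarith
  smul_mem' := by
    intro c x hx
    simp only [Set.mem_setOf_eq] at *
    rw [map_smul_eq_mul, hx, mul_zero]

/-- `A` is `p`-independent: no nontrivial finite linear combination of distinct elements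
of `A` lies in the kernel of the seminorm `p`. -/
def PIndep {𝕜 X : Type*} [RCLike 𝕜] [AddCommGroup X] [Module 𝕜 X]
    (p : Seminorm 𝕜 X) (A : Set X) : Prop :=
  ∀ s : Finset X, ↑s ⊆ A → s.Nonempty → ∀ z : X → 𝕜, (∀ a ∈ s, z a ≠ 0) →
    p (∑ a ∈ s, z a • a) ≠ 0

open Submodule TopologicalSpace

/-- Lemma lile: if `p` is a non-trivial continuous seminorm on a separable
Fréchet space `X` (i.e. `X / ker p` is infinite dimensional), then every countable dense
subset `A` of `X` contains a `p`-independent subset `B` which is still dense in `X`. -/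
theorem exists_pIndep_dense_subset
    (𝕜 : Type*) [RCLike 𝕜] (X : Type*) [AddCommGroup X] [Module 𝕜 X]
    [Module ℝ X] [IsScalarTower ℝ 𝕜 X]
    -- X is a separable Fréchet space: a complete metrizable locally convex TVS
    [UniformSpace X] [IsUniformAddGroup X] [ContinuousSMul 𝕜 X]
    [LocallyConvexSpace ℝ X] [CompleteSpace X] [TopologicalSpace.MetrizableSpace X]
    [TopologicalSpace.SeparableSpace X]
    -- p is a non-trivial continuous seminorm on X
    (p : Seminorm 𝕜 X) (hp : Continuous p)
    (hptriv : ¬ FiniteDimensional 𝕜 (X ⧸ semKer p))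
    -- A is a countable dense subset of X
    (A : Set X) (hAc : A.Countable) (hAd : Dense A) :
    ∃ B : Set X, B ⊆ A ∧ PIndep p B ∧ Dense B := by
  classical
  haveI : IsClosed ((semKer p : Submodule 𝕜 X) : Set X) := by
    have h : ((semKer p : Submodule 𝕜 X) : Set X) = p ⁻¹' {0} := rfl
    rw [h]; exact isClosed_singleton.preimage hp
  have hπcont : Continuous ((semKer p).mkQ) := continuous_quot_mk
  -- Key step: given a finite set s and a nonempty open U, find a point of A in U
  -- outside span s ⊔ ker p.
  have key : ∀ s : Finset X, ∀ U : Set X, IsOpen U → U.Nonempty →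
      ∃ x, x ∈ A ∧ x ∈ U ∧ x ∉ (span 𝕜 (↑s : Set X) ⊔ semKer p : Submodule 𝕜 X) := by
    intro s U hU hUne
    have hMN : (span 𝕜 (↑s : Set X) ⊔ semKer p : Submodule 𝕜 X)
        = (span 𝕜 ((semKer p).mkQ '' ↑s)).comap (semKer p).mkQ := by
      rw [← Submodule.map_span ((semKer p).mkQ), Submodule.comap_map_mkQ, sup_comm]
    set N : Submodule 𝕜 (X ⧸ semKer p) := span 𝕜 ((semKer p).mkQ '' ↑s) with hN
    set M : Submodule 𝕜 X := span 𝕜 (↑s : Set X) ⊔ semKer p with hM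
    have hMtop : M ≠ ⊤ := by
      intro htop
      apply hptriv
      have hNtop : N = ⊤ := by
        have := congrArg (Submodule.map ((semKer p).mkQ)) (hMN.symm.trans htop)
        rwa [Submodule.map_comap_eq, Submodule.map_top, Submodule.range_mkQ,
          top_inf_eq] at this
      refine Module.finite_def.mpr ⟨s.image (fun x => (semKer p).mkQ x), ?_⟩
      rwa [Finset.coe_image, ← hN]
    haveI : FiniteDimensional 𝕜 N := FiniteDimensional.span_of_finite 𝕜 ((s.finite_toSet).image _)
    have hNclosed : IsClosed (N : Set (X ⧸ semKer p)) := N.closed_of_finiteDimensional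
    have hMclosed : IsClosed (M : Set X) := by
      rw [hMN]
      exact hNclosed.preimage hπcont
    have hMint : interior (M : Set X) = ∅ := by
      by_contra h
      exact hMtop (M.eq_top_of_nonempty_interior' (Set.nonempty_iff_ne_empty.2 h))
    have hMcd : Dense ((M : Set X)ᶜ) := interior_eq_empty_iff_dense_compl.mp hMint
    have hWopen : IsOpen (U ∩ (M : Set X)ᶜ) := hU.inter hMclosed.isOpen_compl
    have hWne : (U ∩ (M : Set X)ᶜ).Nonempty := by
      obtain ⟨y, hyM, hyU⟩ := hMcd.exists_mem_open hU hUne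
      exact ⟨y, hyU, hyM⟩
    obtain ⟨x, hxA, hxW⟩ := hAd.exists_mem_open hWopen hWne
    exact ⟨x, hxA, hxW.1, hxW.2⟩
  -- second countability
  haveI : SecondCountableTopology X := by
    letI m : MetricSpace X := TopologicalSpace.metrizableSpaceMetric X
    letI : UniformSpace X := m.toUniformSpace
    exact UniformSpace.secondCountable_of_separable X
  -- enumerate a countable basis together with univ
  have hCc : (insert Set.univ (countableBasis X)).Countable :=
    (countable_countableBasis X).insert _
  obtain ⟨g, hg⟩ := hCc.exists_eq_range ⟨Set.univ, Set.mem_insert _ _⟩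
  have hgopen : ∀ n, IsOpen (g n) := by
    intro n
    have : g n ∈ insert Set.univ (countableBasis X) := by rw [hg]; exact ⟨n, rfl⟩
    rcases this with h | h
    · rw [h]; exact isOpen_univ
    · exact isOpen_of_mem_countableBasis h
  set V : ℕ → Set X := fun n => if (g n).Nonempty then g n else Set.univ with hV
  have hVopen : ∀ n, IsOpen (V n) := by
    intro n; rw [hV]; dsimp only
    split
    · exact hgopen n
    · exact isOpen_univ
  have hVne : ∀ n, (V n).Nonempty := by
    intro n; rw [hV]; dsimp only
    split
    · assumption
    · exact ⟨0, trivial⟩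
  -- the recursive construction
  set step : Finset X → ℕ → X := fun t n => (key t (V n) (hVopen n) (hVne n)).choose with hstep
  have hstepA : ∀ t n, step t n ∈ A := fun t n => (key t (V n) (hVopen n) (hVne n)).choose_spec.1
  have hstepV : ∀ t n, step t n ∈ V n :=
    fun t n => (key t (V n) (hVopen n) (hVne n)).choose_spec.2.1
  have hstepM : ∀ (t : Finset X) (n : ℕ), step t n ∉ (span 𝕜 (t : Set X) ⊔ semKer p : Submodule 𝕜 X) :=
    fun t n => (key t (V n) (hVopen n) (hVne n)).choose_spec.2.2
  set Bf : ℕ → Finset X := fun n => Nat.rec ∅ (fun k t => insert (step t k) t) n with hBf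
  set b : ℕ → X := fun n => step (Bf n) n with hb
  have hBfsucc : ∀ n, Bf (n + 1) = insert (b n) (Bf n) := fun n => rfl
  have hBfmono : ∀ {m n : ℕ}, m ≤ n → Bf m ⊆ Bf n := by
    intro m n hmn
    induction hmn with
    | refl => exact fun x hx => hx
    | step h ih =>
      intro x hx
      rw [hBfsucc]
      exact Finset.mem_insert_of_mem (ih hx)
  have hbBf : ∀ {m n : ℕ}, m < n → b m ∈ Bf n := by
    intro m n hmn
    apply hBfmono hmn
    rw [hBfsucc]
    exact Finset.mem_insert_self _ _
  have hbM : ∀ n, b n ∉ (span 𝕜 (↑(Bf n) : Set X) ⊔ semKer p : Submodule 𝕜 X) :=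
    fun n => hstepM (Bf n) n
  refine ⟨Set.range b, ?_, ?_, ?_⟩
  · rintro x ⟨n, rfl⟩
    exact hstepA _ n
  · -- p-independence
    intro s hsB hsne z hz hps
    -- index function
    have hidx : ∀ x ∈ s, ∃ n, b n = x := fun x hx => hsB hx
    set idx : X → ℕ := fun x => if h : ∃ n, b n = x then h.choose else 0 with hidx'
    have hbidx : ∀ x ∈ s, b (idx x) = x := by
      intro x hx
      rw [hidx']; dsimp only
      rw [dif_pos (hidx x hx)]
      exact (hidx x hx).choose_spec
    obtain ⟨x₀, hx₀s, hx₀max⟩ := s.exists_max_image idx hsne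
    set N := idx x₀ with hNdef
    set M : Submodule 𝕜 X := span 𝕜 (↑(Bf N) : Set X) ⊔ semKer p with hMdef
    have hsum_mem : (∑ a ∈ s, z a • a) ∈ M := by
      apply Submodule.mem_sup_right
      exact hps
    have hrest : (∑ a ∈ s.erase x₀, z a • a) ∈ M := by
      apply Submodule.sum_mem
      intro a ha
      have has : a ∈ s := Finset.mem_of_mem_erase ha
      have hane : a ≠ x₀ := Finset.ne_of_mem_erase ha
      have hlt : idx a < N := by
        rcases lt_or_eq_of_le (hx₀max a has) with h | h
        · exact h
        · exfalso
          apply hane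
          rw [← hbidx a has, ← hbidx x₀ hx₀s, h]
      have : a ∈ Bf N := by
        rw [← hbidx a has]
        exact hbBf hlt
      exact Submodule.smul_mem _ _ (Submodule.mem_sup_left (Submodule.subset_span this))
    have hx₀M : z x₀ • x₀ ∈ M := by
      have heq : z x₀ • x₀ = (∑ a ∈ s, z a • a) - ∑ a ∈ s.erase x₀, z a • a := by
        rw [eq_sub_iff_add_eq]
        exact Finset.add_sum_erase s (fun a => z a • a) hx₀s
      rw [heq]
      exact Submodule.sub_mem _ hsum_mem hrest
    have : x₀ ∈ M := by
      have := Submodule.smul_mem M (z x₀)⁻¹ hx₀M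
      rwa [inv_smul_smul₀ (hz x₀ hx₀s)] at this
    apply hbM N
    rw [← hMdef] at *
    have hbN : b N = x₀ := hbidx x₀ hx₀s
    rwa [hbN]
  · -- density
    rw [dense_iff_inter_open]
    intro W hW hWne
    obtain ⟨x, hxW⟩ := hWne
    obtain ⟨t, htB, hxt, htW⟩ :=
      (isBasis_countableBasis X).exists_subset_of_mem_open hxW hW
    have : t ∈ insert Set.univ (countableBasis X) := Set.mem_insert_of_mem _ htB
    rw [hg] at this
    obtain ⟨n, hn⟩ := this
    have hVn : V n = t := by
      rw [hV]; dsimp only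
      rw [← hn, if_pos]
      rw [hn]; exact ⟨x, hxt⟩
    refine ⟨b n, ?_, ⟨n, rfl⟩⟩
    apply htW
    rw [← hVn]
    exact hstepV _ n
end
end

section
/- Let p be a continuous seminorm on a locally convex topological vector space X over 𝕂 (𝕂 = ℝ or ℂ) and E a linear subspace of X of countably infinite dimension such that E ∩ ker p = {0}. Then there exist a Hamel basis (uₙ)_{n∈ℕ} of E and a sequence (fₙ)_{n∈ℕ} of continuous linear functionals on X with p*(fₙ) < ∞ for every n, such that fₙ(uₘ) = δ_{n,m} (Kronecker delta) for all n, m ∈ ℕ. -/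
noncomputable section

/-- Triangular modification of a sequence: `triSeq e φ m = e m - ∑_{k<m} φ k m • triSeq e φ k`. -/
private noncomputable def triSeq {𝕜 M : Type*} [Field 𝕜] [AddCommGroup M] [Module 𝕜 M]
    (e : ℕ → M) (φ : ℕ → ℕ → 𝕜) : ℕ → M
  | m => e m - ∑ k ∈ (Finset.range m).attach, φ k.1 m • triSeq e φ k.1
decreasing_by exact Finset.mem_range.mp k.2

private theorem triSeq_eq {𝕜 M : Type*} [Field 𝕜] [AddCommGroup M] [Module 𝕜 M]
    (e : ℕ → M) (φ : ℕ → ℕ → 𝕜) (m : ℕ) :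
    triSeq e φ m = e m - ∑ k ∈ Finset.range m, φ k m • triSeq e φ k := by
  rw [triSeq, ← Finset.sum_attach (Finset.range m) (fun k => φ k m • triSeq e φ k)]

/-- Every linear functional on a finite-dimensional subspace on which a seminorm `p` is
a norm is bounded by a multiple of `p`. -/
private theorem coord_bound {𝕜 : Type*} [RCLike 𝕜] {X : Type*} [AddCommGroup X] [Module 𝕜 X]
    (p : Seminorm 𝕜 X) (F : Submodule 𝕜 X) [FiniteDimensional 𝕜 F]
    (hF : ∀ x : F, p (x : X) = 0 → x = 0) (g : F →ₗ[𝕜] 𝕜) :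
    ∃ c : ℝ, 0 ≤ c ∧ ∀ x : F, ‖g x‖ ≤ c * p (x : X) := by
  letI : NormedAddCommGroup F := AddGroupNorm.toNormedAddCommGroup
    { toFun := fun x => p (x : X)
      map_zero' := by simp
      add_le' := fun x y => by
        simpa using map_add_le_add p (x : X) (y : X)
      neg' := fun x => by simp [map_neg_eq_map p]
      eq_zero_of_map_eq_zero' := fun x h => hF x h }
  letI : NormedSpace 𝕜 F := ⟨fun c x => by
    change p ((c • x : F) : X) ≤ ‖c‖ * p (x : X)
    rw [Submodule.coe_smul, map_smul_eq_mul]⟩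
  let g' := LinearMap.toContinuousLinearMap g
  exact ⟨‖g'‖, norm_nonneg _, fun x => g'.le_opNorm x⟩

/-- Hahn-Banach: extension of a linear functional dominated by a seminorm, over `RCLike`. -/
private theorem hb_ext {𝕜 : Type*} [RCLike 𝕜] {X : Type*} [AddCommGroup X] [Module 𝕜 X]
    (p : Seminorm 𝕜 X) (F : Submodule 𝕜 X) (g : F →ₗ[𝕜] 𝕜)
    (hg : ∀ x : F, ‖g x‖ ≤ p (x : X)) :
    ∃ G : X →ₗ[𝕜] 𝕜, (∀ x : F, G (x : X) = g x) ∧ ∀ x : X, ‖G x‖ ≤ p x := by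
  letI : SeminormedAddCommGroup X :=
    AddGroupSeminorm.toSeminormedAddCommGroup p.toAddGroupSeminorm
  letI : NormedSpace 𝕜 X := ⟨fun c x => by
    change p (c • x) ≤ ‖c‖ * p x
    rw [map_smul_eq_mul]⟩
  have hnorm : ∀ x : X, ‖x‖ = p x := fun x => rfl
  let g' : F →L[𝕜] 𝕜 := g.mkContinuous 1 (fun x => by
    rw [one_mul]; exact hg x)
  obtain ⟨G, hext, hGnorm⟩ := exists_extension_norm_eq F g'
  refine ⟨G.toLinearMap, fun x => hext x, fun x => ?_⟩
  calc ‖G x‖ ≤ ‖G‖ * ‖x‖ := G.le_opNorm x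
    _ ≤ 1 * p x := by
        refine mul_le_mul_of_nonneg_right ?_ (apply_nonneg p x)
        rw [hGnorm]
        exact g.mkContinuous_norm_le zero_le_one _
    _ = p x := one_mul _

/-- Lemma bububu: if `p` is a continuous seminorm on a locally convex
space `X` and `E` is a countably infinite-dimensional subspace of `X` with
`E ∩ ker p = {0}`, then there are a Hamel basis `(uₙ)` of `E` and continuous linear
functionals `fₙ` on `X` with `p*(fₙ) < ∞` and `fₙ(uₘ) = δ_{n,m}`. -/
theorem exists_biorthogonal_system
    (𝕜 : Type*) [RCLike 𝕜] (X : Type*) [AddCommGroup X] [Module 𝕜 X]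
    [Module ℝ X] [IsScalarTower ℝ 𝕜 X]
    -- X is a locally convex TVS
    [TopologicalSpace X] [IsTopologicalAddGroup X] [ContinuousSMul 𝕜 X]
    [LocallyConvexSpace ℝ X]
    -- p is a continuous seminorm on X
    (p : Seminorm 𝕜 X) (hp : Continuous p)
    -- E is a countably infinite-dimensional subspace with E ∩ ker p = {0}
    (E : Submodule 𝕜 X) (hdim : Nonempty (Module.Basis ℕ 𝕜 E))
    (hEp : ∀ x ∈ E, p x = 0 → x = 0) :
    ∃ (u : Module.Basis ℕ 𝕜 E) (f : ℕ → X →L[𝕜] 𝕜),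
      (∀ n : ℕ, ∃ c : ℝ, ∀ x : X, ‖f n x‖ ≤ c * p x) ∧
      ∀ n m : ℕ, f n (u m : X) = if n = m then 1 else 0 := by
  obtain ⟨e⟩ := hdim
  set eX : ℕ → X := fun n => (e n : X) with heX
  -- linear independence of eX
  have hliX : LinearIndependent 𝕜 eX :=
    e.linearIndependent.map' E.subtype E.ker_subtype
  -- Step 1: for each n, a continuous functional dominated by p, dual to e₀,…,eₙ.
  have key : ∀ n : ℕ, ∃ (g : X →L[𝕜] 𝕜),
      (∃ c : ℝ, ∀ x : X, ‖g x‖ ≤ c * p x) ∧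
      ∀ m : ℕ, m ≤ n → g (eX m) = if n = m then 1 else 0 := by
    intro n
    set v : Fin (n + 1) → X := fun j => eX j with hv
    have hliv : LinearIndependent 𝕜 v := hliX.comp _ Fin.val_injective
    set F : Submodule 𝕜 X := Submodule.span 𝕜 (Set.range v) with hFdef
    haveI : FiniteDimensional 𝕜 F := FiniteDimensional.span_of_finite 𝕜 (Set.finite_range v)
    have hFE : F ≤ E := by
      rw [hFdef, Submodule.span_le]
      rintro x ⟨j, rfl⟩
      exact (e j).2
    have hF : ∀ x : F, p (x : X) = 0 → x = 0 := fun x h =>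
      Subtype.ext (hEp _ (hFE x.2) h)
    let B : Module.Basis (Fin (n + 1)) 𝕜 F := Module.Basis.span hliv
    let ε : F →ₗ[𝕜] 𝕜 := B.coord ⟨n, n.lt_succ_self⟩
    obtain ⟨c, hc0, hc⟩ := coord_bound p F hF ε
    set q : Seminorm 𝕜 X := c.toNNReal • p with hq
    have hqx : ∀ x : X, q x = c * p x := fun x => by simp [hq, NNReal.smul_def, Real.coe_toNNReal c hc0]
    obtain ⟨G, hGext, hGle⟩ := hb_ext q F ε (fun x => by rw [hqx]; exact hc x)
    -- continuity of G
    have hGc : Continuous G := by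
      apply continuous_of_continuousAt_zero G.toAddMonoidHom
      have h0 : Filter.Tendsto (fun x : X => c * p x) (nhds 0) (nhds 0) := by
        have := (hp.tendsto 0).const_mul c
        simpa using this
      have : Filter.Tendsto G (nhds 0) (nhds 0) :=
        squeeze_zero_norm (fun x => (hGle x).trans_eq (hqx x)) h0
      simpa [ContinuousAt, map_zero] using this
    refine ⟨⟨G, hGc⟩, ⟨c, fun x => (hGle x).trans_eq (hqx x)⟩, fun m hm => ?_⟩
    have hmem : eX m ∈ F := Submodule.subset_span ⟨⟨m, Nat.lt_succ_of_le hm⟩, rfl⟩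
    have hBm : B ⟨m, Nat.lt_succ_of_le hm⟩ = (⟨eX m, hmem⟩ : F) :=
      Module.Basis.span_apply hliv _
    have : G (eX m) = ε ⟨eX m, hmem⟩ := hGext ⟨eX m, hmem⟩
    rw [show ((⟨G, hGc⟩ : X →L[𝕜] 𝕜) (eX m)) = G (eX m) from rfl, this, ← hBm]
    show B.coord _ (B _) = _
    rw [Module.Basis.coord_apply, Module.Basis.repr_self, Finsupp.single_apply]
    simp [Fin.ext_iff, eq_comm]
  choose f hfb hfe using key
  -- Step 2: the triangular correction of the basis.
  set φ : ℕ → ℕ → 𝕜 := fun k m => f k (eX m) with hφ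
  set u' : ℕ → E := triSeq e φ with hu'
  have hu'eq : ∀ m, u' m = e m - ∑ k ∈ Finset.range m, φ k m • u' k := fun m =>
    triSeq_eq e φ m
  -- the biorthogonality relations
  have horth : ∀ m n : ℕ, f n ((u' m : E) : X) = if n = m then 1 else 0 := by
    intro m
    induction m using Nat.strong_induction_on with
    | _ m ih =>
      intro n
      have hcoe : ((u' m : E) : X)
          = eX m - ∑ k ∈ Finset.range m, φ k m • ((u' k : E) : X) := by
        rw [hu'eq m]
        push_cast
        rfl
      have : f n ((u' m : E) : X)
          = f n (eX m) - ∑ k ∈ Finset.range m, φ k m * f n ((u' k : E) : X) := by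
        rw [hcoe, map_sub, map_sum]
        simp [smul_eq_mul]
      rw [this]
      have hsum : ∑ k ∈ Finset.range m, φ k m * f n ((u' k : E) : X)
          = if n ∈ Finset.range m then φ n m else 0 := by
        rw [← Finset.sum_ite_eq (Finset.range m) n (fun k => φ k m)]
        refine Finset.sum_congr rfl fun k hk => ?_
        rw [ih k (Finset.mem_range.mp hk) n]
        by_cases h : n = k <;> simp [h]
      rw [hsum]
      by_cases hnm : n < m
      · rw [if_pos (Finset.mem_range.mpr hnm), hφ]
        simp [if_neg (Nat.ne_of_lt hnm)]
      · rw [if_neg (fun h => hnm (Finset.mem_range.mp h))]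
        rw [sub_zero]
        exact hfe n m (Nat.le_of_not_lt hnm)
  -- u' is linearly independent
  have hli' : LinearIndependent 𝕜 u' := by
    rw [linearIndependent_iff]
    intro l hl
    ext n
    have := congrArg (fun z : E => f n (z : X)) hl
    simp only [Submodule.coe_zero, map_zero] at this
    rw [Finsupp.linearCombination_apply] at this
    have hz : f n (((l.sum fun i a => a • u' i : E)) : X) = l n := by
      rw [Finsupp.sum, Submodule.coe_sum]
      rw [map_sum]
      have : ∀ i ∈ l.support, f n (((l i • u' i : E)) : X) = l i * (if n = i then 1 else 0) := by
        intro i _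
        rw [Submodule.coe_smul, map_smul, horth i n, smul_eq_mul]
      rw [Finset.sum_congr rfl this]
      simp only [mul_ite, mul_one, mul_zero]
      rw [Finset.sum_ite_eq l.support n l]
      by_cases h : n ∈ l.support
      · rw [if_pos h]
      · rw [if_neg h]
        exact (Finsupp.notMem_support_iff.mp h).symm
    rw [hz] at this
    simpa using this
  -- u' spans E
  have hsp : ⊤ ≤ Submodule.span 𝕜 (Set.range u') := by
    rw [← e.span_eq]
    rw [Submodule.span_le]
    rintro x ⟨m, rfl⟩
    have : e m = u' m + ∑ k ∈ Finset.range m, φ k m • u' k := by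
      rw [hu'eq m]; abel
    rw [this]
    refine Submodule.add_mem _ (Submodule.subset_span ⟨m, rfl⟩) ?_
    exact Submodule.sum_mem _ fun k _ =>
      Submodule.smul_mem _ _ (Submodule.subset_span ⟨k, rfl⟩)
  refine ⟨Module.Basis.mk hli' hsp, f, fun n => hfb n, fun n m => ?_⟩
  rw [Module.Basis.mk_apply]
  exact horth m n

end
end
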